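/- The improper integral ∫₀^{θ*} dr / √(2 ∫_r^{θ*} f(s) ds) is finite. -/

import Mathlib

open MeasureTheory Set intervalIntegral

theorem stmt_6 (f : ℝ → ℝ) (θs : ℝ) (hf : ContDiff ℝ 1 f)
    (hf0 : f 0 = 0) (hf1 : f 1 = 0) (hf'0 : 0 < deriv f 0)
    (hfpos : ∀ u ∈ Set.Ioo (0:ℝ) 1, 0 < f u)
    (hθs : θs ∈ Set.Ioo (0:ℝ) 1) :
    MeasureTheory.IntegrableOn
      (fun r : ℝ => 1 / Real.sqrt (2 * ∫ s in r..θs, f s))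
      (Set.Ioo 0 θs) := by
  obtain ⟨hθ0, hθ1⟩ := hθs
  have hfc : Continuous f := hf.continuous
  have hfint : ∀ a b : ℝ, IntervalIntegrable f MeasureTheory.volume a b :=
    fun a b => hfc.intervalIntegrable a b
  set F : ℝ → ℝ := fun r => ∫ s in r..θs, f s with hFdef
  have hFcont : Continuous F := by
    have h1 : Continuous fun r : ℝ => ∫ s in (0:ℝ)..r, f s :=
      intervalIntegral.continuous_primitive (fun a b => hfint a b) 0
    have : ∀ r, F r = (∫ s in (0:ℝ)..θs, f s) - ∫ s in (0:ℝ)..r, f s := fun r =>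
      (intervalIntegral.integral_interval_sub_left (hfint 0 θs) (hfint 0 r)).symm
    rw [funext this]
    exact continuous_const.sub h1
  -- nonnegativity of f on [0,1]
  have hfnn : ∀ u ∈ Icc (0:ℝ) 1, 0 ≤ f u := by
    intro u hu
    rcases eq_or_lt_of_le hu.1 with h | h
    · simp [← h, hf0]
    rcases eq_or_lt_of_le hu.2 with h' | h'
    · simp [h', hf1]
    exact (hfpos u ⟨h, h'⟩).le
  -- minimum of f on [θs/2, θs]
  obtain ⟨x0, hx0, hx0min⟩ :=
    (isCompact_Icc (a := θs/2) (b := θs)).exists_isMinOn ⟨θs, by constructor <;> linarith⟩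
      hfc.continuousOn
  set c : ℝ := f x0 with hcdef
  have hc : 0 < c := hfpos x0 ⟨by linarith [hx0.1], by linarith [hx0.2]⟩
  set m : ℝ := c / 2 with hmdef
  have hm : 0 < m := by positivity
  -- key lower bound
  have hFmono : ∀ r r' : ℝ, 0 ≤ r → r ≤ r' → r' ≤ θs → F r' ≤ F r := by
    intro r r' h0 hrr' hr'
    have : F r = (∫ s in r..r', f s) + F r' :=
      (intervalIntegral.integral_add_adjacent_intervals (hfint r r') (hfint r' θs)).symm
    rw [this]
    have : 0 ≤ ∫ s in r..r', f s := by
      apply intervalIntegral.integral_nonneg hrr'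
      intro u hu
      exact hfnn u ⟨le_trans h0 hu.1, by linarith [hu.2]⟩
    linarith
  have hFlow : ∀ r ∈ Ioo 0 θs, m * (θs - r) ≤ F r := by
    intro r hr
    rcases le_or_gt (θs/2) r with h | h
    · -- c * (θs - r) ≤ F r via const lower bound
      have hle : (∫ s in r..θs, (fun _ => c) s) ≤ F r := by
        apply intervalIntegral.integral_mono_on hr.2.le (intervalIntegrable_const) (hfint r θs)
        intro u hu
        exact hx0min ⟨le_trans h hu.1, hu.2⟩
      rw [intervalIntegral.integral_const, smul_eq_mul] at hle
      nlinarith [hr.2]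
    · -- r < θs/2 : F r ≥ F (θs/2) ≥ c * θs/2 = m * θs ≥ m * (θs - r)
      have h1 : F (θs/2) ≤ F r := hFmono r (θs/2) hr.1.le h.le (by linarith)
      have h2 : c * (θs - θs/2) ≤ F (θs/2) := by
        have hle : (∫ s in (θs/2)..θs, (fun _ => c) s) ≤ F (θs/2) := by
          apply intervalIntegral.integral_mono_on (by linarith) intervalIntegrable_const
            (hfint _ _)
          intro u hu
          exact hx0min ⟨hu.1, hu.2⟩
        rw [intervalIntegral.integral_const, smul_eq_mul] at hle
        linarith
      nlinarith [hr.1]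
  -- dominating function
  set g : ℝ → ℝ := fun r => (Real.sqrt (2 * (m * (θs - r))))⁻¹ with hgdef
  have hgint : IntegrableOn g (Ioo 0 θs) := by
    have h1 : IntervalIntegrable (fun x : ℝ => x ^ (-(1/2) : ℝ)) MeasureTheory.volume 0 θs :=
      intervalIntegral.intervalIntegrable_rpow' (by norm_num)
    have h2 : IntervalIntegrable (fun x : ℝ => (θs - x) ^ (-(1/2) : ℝ))
        MeasureTheory.volume 0 θs := by
      have := (h1.comp_sub_left θs).symm
      simpa using this
    have h3 : IntegrableOn (fun x : ℝ => (θs - x) ^ (-(1/2) : ℝ)) (Ioo 0 θs) := by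
      have := (intervalIntegrable_iff_integrableOn_Ioo_of_le hθ0.le).mp h2
      exact this
    have h4 : IntegrableOn (fun x : ℝ => (Real.sqrt (2 * m))⁻¹ * (θs - x) ^ (-(1/2) : ℝ))
        (Ioo 0 θs) := h3.const_mul _
    apply h4.congr_fun _ measurableSet_Ioo
    intro x hx
    have hmx : (0:ℝ) ≤ θs - x := by linarith [hx.2]
    show (Real.sqrt (2 * m))⁻¹ * (θs - x) ^ (-(1/2) : ℝ) = (Real.sqrt (2 * (m * (θs - x))))⁻¹
    have h5 : (2 : ℝ) * (m * (θs - x)) = (2 * m) * (θs - x) := by ring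
    rw [h5, Real.sqrt_mul (by positivity : (0:ℝ) ≤ 2 * m), mul_inv]
    congr 1
    rw [Real.sqrt_eq_rpow, ← Real.rpow_neg hmx]
  -- conclude
  have hmeas : AEStronglyMeasurable (fun r : ℝ => 1 / Real.sqrt (2 * F r))
      (MeasureTheory.volume.restrict (Ioo 0 θs)) := by
    have : Continuous fun r : ℝ => Real.sqrt (2 * F r) :=
      (continuous_const.mul hFcont).sqrt
    simpa only [one_div, Pi.inv_def] using this.measurable.inv.aestronglyMeasurable
  apply MeasureTheory.Integrable.mono' hgint hmeas
  rw [MeasureTheory.ae_restrict_iff' measurableSet_Ioo]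
  filter_upwards with r hr
  have h1 : 0 < m * (θs - r) := by
    have := hr.2; have := hr.1; nlinarith
  have h2 : m * (θs - r) ≤ F r := hFlow r hr
  have h3 : Real.sqrt (2 * (m * (θs - r))) ≤ Real.sqrt (2 * F r) :=
    Real.sqrt_le_sqrt (by linarith)
  have h4 : 0 < Real.sqrt (2 * (m * (θs - r))) := Real.sqrt_pos.mpr (by linarith)
  rw [Real.norm_eq_abs, abs_of_nonneg (by positivity)]
  rw [hgdef, one_div]
  exact inv_anti₀ h4 h3
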